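/- Let M be a von Neumann algebra with a projection P having core 0 and central carrier I, and let L : M → M be an additive map such that L(AB − BA) = L(A)B − BL(A) + L(B)A − AL(B) whenever AB = 0. Then PL(P)P + (I−P)L(P)(I−P) belongs to the center Z(M). -/

import Mathlib

variable {H : Type*} [NormedAddCommGroup H] [InnerProductSpace ℂ H] [CompleteSpace H]

/-- `Z` lies in the center of the von Neumann algebra `M`. -/
def VonNeumannAlgebra.IsCentral (M : VonNeumannAlgebra H) (Z : H →L[ℂ] H) : Prop :=
  Z ∈ M ∧ ∀ A ∈ M, Z * A = A * Z

/-- `P` is a projection (self-adjoint idempotent) in `M`. -/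
def VonNeumannAlgebra.IsProjection (M : VonNeumannAlgebra H) (P : H →L[ℂ] H) : Prop :=
  P ∈ M ∧ P * P = P ∧ star P = P

/-- `Q` is a central projection of `M`. -/
def VonNeumannAlgebra.IsCentralProjection (M : VonNeumannAlgebra H) (Q : H →L[ℂ] H) : Prop :=
  M.IsCentral Q ∧ Q * Q = Q ∧ star Q = Q

/-- The core of the projection `P` (the largest central projection below `P`) is zero,
i.e. the only central projection `Q` with `Q ≤ P` (equivalently `Q * P = Q`) is `0`. -/
def VonNeumannAlgebra.CoreZero (M : VonNeumannAlgebra H) (P : H →L[ℂ] H) : Prop :=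
  ∀ Q : H →L[ℂ] H, M.IsCentralProjection Q → Q * P = Q → Q = 0

/-- The central carrier of the projection `P` (the smallest central projection above `P`)
is `1`, i.e. the only central projection `Q` with `Q * P = P` is `1`. -/
def VonNeumannAlgebra.CarrierOne (M : VonNeumannAlgebra H) (P : H →L[ℂ] H) : Prop :=
  ∀ Q : H →L[ℂ] H, M.IsCentralProjection Q → Q * P = P → Q = 1

/-- `M` has no central summand of type I₁: equivalently, `M` contains a projection
with core `0` and central carrier `1`. -/
def VonNeumannAlgebra.NoTypeI1 (M : VonNeumannAlgebra H) : Prop :=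
  ∃ P : H →L[ℂ] H, M.IsProjection P ∧ M.CoreZero P ∧ M.CarrierOne P

/-- If an operator `T` and its star both preserve a subspace admitting an orthogonal
projection, then `T` commutes with the projection. -/
lemma commute_proj {K : Submodule ℂ H} [CompleteSpace K] {T : H →L[ℂ] H}
    (h1 : ∀ x ∈ K, T x ∈ K) (h2 : ∀ x ∈ K, (star T) x ∈ K) :
    (K.subtypeL ∘L K.orthogonalProjectionOnto) * T = T * (K.subtypeL ∘L K.orthogonalProjectionOnto) := by
  ext ξ
  have hmem : (↑(K.orthogonalProjectionOnto ξ) : H) ∈ K := Submodule.coe_mem _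
  have hperp : ξ - ↑(K.orthogonalProjectionOnto ξ) ∈ Kᗮ := K.sub_starProjection_mem_orthogonal ξ
  have hTperp : T (ξ - ↑(K.orthogonalProjectionOnto ξ)) ∈ Kᗮ := by
    rw [Submodule.mem_orthogonal]
    intro u hu
    have : inner ℂ u (T (ξ - ↑(K.orthogonalProjectionOnto ξ))) =
        (inner ℂ ((star T) u) (ξ - ↑(K.orthogonalProjectionOnto ξ)) : ℂ) := by
      rw [ContinuousLinearMap.star_eq_adjoint, ContinuousLinearMap.adjoint_inner_left]
    rw [this]
    exact (Submodule.mem_orthogonal K _).1 hperp _ (h2 u hu)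
  have hsplit : T ξ = T (↑(K.orthogonalProjectionOnto ξ)) + T (ξ - ↑(K.orthogonalProjectionOnto ξ)) := by
    rw [← map_add]; congr 1; abel
  simp only [ContinuousLinearMap.mul_apply, ContinuousLinearMap.comp_apply]
  rw [hsplit, map_add]
  rw [Submodule.orthogonalProjectionOnto_apply_of_mem_orthogonal hTperp]
  have : (K.orthogonalProjectionOnto (T ↑(K.orthogonalProjectionOnto ξ)) : H)
      = T ↑(K.orthogonalProjectionOnto ξ) :=
    Submodule.starProjection_eq_self_iff.2 (h1 _ hmem)
  simpa using this

/-- If `Z * (X * (1-P)) = 0` for all `X ∈ M`, and `P` has core zero, then `Z = 0`. -/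
lemma annihilator_eq_zero (M : VonNeumannAlgebra H) (P : H →L[ℂ] H)
    (hPmem : P ∈ M) (hcore : M.CoreZero P) (Z : H →L[ℂ] H)
    (hZ : ∀ X ∈ M, Z * (X * (1 - P)) = 0) : Z = 0 := by
  set Q : H →L[ℂ] H := 1 - P with hQdef
  have hQmem : Q ∈ M := sub_mem (one_mem M) hPmem
  set Gen : Set H := {y | ∃ X ∈ M, ∃ ξ : H, y = X (Q ξ)} with hGen
  set S : Submodule ℂ H := Submodule.span ℂ Gen with hS
  set K : Submodule ℂ H := S.topologicalClosure with hK
  haveI : CompleteSpace K := S.isClosed_topologicalClosure.completeSpace_coe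
  set E : H →L[ℂ] H := K.subtypeL ∘L K.orthogonalProjectionOnto with hE
  have inv : ∀ (T : H →L[ℂ] H), (∀ x ∈ Gen, T x ∈ Gen) → ∀ x ∈ K, T x ∈ K := by
    intro T h1
    have h2 : S ≤ Submodule.comap (T : H →ₗ[ℂ] H) S :=
      Submodule.span_le.2 fun x hx => Submodule.subset_span (h1 x hx)
    have h3 : K ≤ Submodule.comap (T : H →ₗ[ℂ] H) K := by
      apply Submodule.topologicalClosure_minimal
      · exact h2.trans (Submodule.comap_mono S.le_topologicalClosure)
      · show IsClosed (⇑T ⁻¹' (K : Set H))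
        exact S.isClosed_topologicalClosure.preimage T.continuous
    exact fun x hx => h3 hx
  -- members of M preserve Gen
  have memGen : ∀ A ∈ M, ∀ x ∈ Gen, A x ∈ Gen := by
    rintro A hA x ⟨X, hX, ξ, rfl⟩
    exact ⟨A * X, mul_mem hA hX, ξ, rfl⟩
  -- commutant elements preserve Gen
  have commGen : ∀ z : (H →L[ℂ] H), (∀ X ∈ M, X * z = z * X) → ∀ x ∈ Gen, z x ∈ Gen := by
    rintro z hz x ⟨X, hX, ξ, rfl⟩
    refine ⟨X, hX, z ξ, ?_⟩
    have h := hz (X * Q) (mul_mem hX hQmem)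
    have := congrFun (congrArg DFunLike.coe h) ξ
    simpa using this.symm
  have hEmem : E ∈ M := by
    rw [← SetLike.mem_coe, ← M.centralizer_centralizer]
    intro z hz
    have hz' : ∀ X ∈ M, X * z = z * X := fun X hX => hz X hX
    have hzstar : ∀ X ∈ M, X * (star z) = (star z) * X := by
      intro X hX
      have h1 : (star X) * z = z * (star X) := hz' (star X) (star_mem hX)
      calc X * star z = star (z * (star X)) := by simp
        _ = star ((star X) * z) := by rw [h1]
        _ = star z * X := by simp
    exact (commute_proj (inv z (commGen z hz')) (inv (star z) (commGen (star z) hzstar))).symm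
  have hEcomm : ∀ A ∈ M, E * A = A * E := by
    intro A hA
    exact commute_proj (inv A (memGen A hA)) (inv (star A) (memGen (star A) (star_mem hA)))
  have hfix : ∀ x ∈ K, E x = x := fun x hx => Submodule.starProjection_eq_self_iff.2 hx
  have hQK : ∀ ξ : H, Q ξ ∈ K := by
    intro ξ
    apply S.le_topologicalClosure
    exact Submodule.subset_span ⟨1, one_mem M, ξ, by simp⟩
  have hEQ : E * Q = Q := by ext ξ; exact hfix _ (hQK ξ)
  have hidem : E * E = E := by
    ext ξ
    exact hfix _ (Submodule.coe_mem _)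
  have hstarE : star E = E := isSelfAdjoint_starProjection K
  have hCP : M.IsCentralProjection (1 - E) := by
    refine ⟨⟨sub_mem (one_mem M) hEmem, fun A hA => ?_⟩, ?_, ?_⟩
    · rw [sub_mul, mul_sub, one_mul, mul_one, hEcomm A hA]
    · rw [sub_mul, mul_sub, mul_sub, one_mul, mul_one, hidem]; abel
    · rw [star_sub, star_one, hstarE]
  have h0 : (1 - E) * Q = 0 := by rw [sub_mul, one_mul, hEQ, sub_self]
  have hle : (1 - E) * P = 1 - E := by
    have hP' : P = 1 - Q := (sub_sub_cancel 1 P).symm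
    rw [hP', mul_sub, mul_one, h0, sub_zero]
  have hE1 : E = 1 := (sub_eq_zero.mp (hcore (1 - E) hCP hle)).symm
  have hZK : ∀ x ∈ K, Z x = 0 := by
    have h1 : ∀ x ∈ Gen, Z x = 0 := by
      rintro x ⟨X, hX, ξ, rfl⟩
      have := congrFun (congrArg DFunLike.coe (hZ X hX)) ξ
      simpa using this
    have h2 : S ≤ LinearMap.ker (Z : H →ₗ[ℂ] H) :=
      Submodule.span_le.2 fun x hx => h1 x hx
    have h3 : K ≤ LinearMap.ker (Z : H →ₗ[ℂ] H) :=
      S.topologicalClosure_minimal h2 (ContinuousLinearMap.isClosed_ker Z)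
    exact fun x hx => h3 hx
  ext ξ
  have h4 : Z (E ξ) = 0 := hZK _ (Submodule.coe_mem _)
  rw [hE1] at h4
  simpa using h4

theorem diag_part_of_LP_central (M : VonNeumannAlgebra H) (P : H →L[ℂ] H)
    (hP : M.IsProjection P) (hcore : M.CoreZero P) (hcar : M.CarrierOne P)
    (L : (H →L[ℂ] H) → (H →L[ℂ] H))
    (hmaps : ∀ A ∈ M, L A ∈ M)
    (hadd : ∀ A ∈ M, ∀ B ∈ M, L (A + B) = L A + L B)
    (hcond : ∀ A ∈ M, ∀ B ∈ M, A * B = 0 →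
      L (A * B - B * A) = L A * B - B * L A + L B * A - A * L B) :
    M.IsCentral (P * L P * P + (1 - P) * L P * (1 - P)) := by
  obtain ⟨hPmem, hpp, -⟩ := hP
  set q : H →L[ℂ] H := 1 - P with hq
  set e : H →L[ℂ] H := L P with he
  have hqmem : q ∈ M := sub_mem (one_mem M) hPmem
  have hpq : P * q = 0 := by rw [hq, mul_sub, mul_one, hpp, sub_self]
  have hqp : q * P = 0 := by rw [hq, sub_mul, one_mul, hpp, sub_self]
  have hqq : q * q = q := by rw [hq, mul_sub, mul_one, sub_mul, one_mul, hpp, sub_self, sub_zero]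
  have hpp' : ∀ x : H →L[ℂ] H, P * (P * x) = P * x := fun x => by rw [← mul_assoc, hpp]
  have hpq' : ∀ x : H →L[ℂ] H, P * (q * x) = 0 := fun x => by rw [← mul_assoc, hpq, zero_mul]
  have hqp' : ∀ x : H →L[ℂ] H, q * (P * x) = 0 := fun x => by rw [← mul_assoc, hqp, zero_mul]
  have hqq' : ∀ x : H →L[ℂ] H, q * (q * x) = q * x := fun x => by rw [← mul_assoc, hqq]
  have cancel : ∀ a b c : H →L[ℂ] H, a = a + b - c → b = c := by
    intro a b c h
    have h' : a + (b - c) = a + 0 := by rw [add_zero, ← add_sub_assoc]; exact h.symm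
    exact sub_eq_zero.mp (add_left_cancel h')
  have h0 : L 0 = 0 := by
    have h := hadd 0 (zero_mem M) 0 (zero_mem M)
    rw [add_zero] at h
    exact (left_eq_add.mp h)
  have Lneg : ∀ A ∈ M, L (-A) = - L A := by
    intro A hA
    have h := hadd A hA (-A) (neg_mem hA)
    rw [add_neg_cancel, h0] at h
    have h' : L A + L (-A) = 0 := h.symm
    rw [add_comm] at h'
    exact eq_neg_of_add_eq_zero_left h'
  -- the two corner relations
  have r12 : ∀ X ∈ M, P * (e * (P * (X * q))) = P * (X * (q * (e * q))) := by
    intro X hX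
    have hXq : P * X * q ∈ M := mul_mem (mul_mem hPmem hX) hqmem
    have hzero : (P * X * q) * P = 0 := by
      simp only [mul_assoc, hqp, mul_zero]
    have heq := hcond _ hXq _ hPmem hzero
    have hpA : P * (P * X * q) = P * X * q := by
      simp only [← mul_assoc, hpp]
    rw [hzero, hpA, zero_sub, Lneg _ hXq] at heq
    have h2 := congrArg (fun y => P * y * q) heq
    simp only [mul_sub, sub_mul, mul_add, add_mul, mul_neg, neg_mul, mul_assoc,
      hpp, hpq, hqp, hqq, hpp', hpq', hqp', hqq', mul_zero, zero_mul,
      add_zero, zero_add, sub_zero, zero_sub, neg_neg] at h2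
    rw [← he] at h2
    exact cancel _ _ _ h2
  have r22 : ∀ X ∈ M, q * (e * (q * (X * q))) = q * (X * (q * (e * q))) := by
    intro X hX
    have hXq : q * X * q ∈ M := mul_mem (mul_mem hqmem hX) hqmem
    have hzero : (q * X * q) * P = 0 := by
      simp only [mul_assoc, hqp, mul_zero]
    have hzero2 : P * (q * X * q) = 0 := by
      simp only [← mul_assoc, hpq, zero_mul]
    have heq := hcond _ hXq _ hPmem hzero
    rw [hzero, hzero2, sub_zero, h0] at heq
    have h2 := congrArg (fun y => q * y * q) heq
    simp only [mul_sub, sub_mul, mul_add, add_mul, mul_neg, neg_mul, mul_assoc,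
      hpp, hpq, hqp, hqq, hpp', hpq', hqp', hqq', mul_zero, zero_mul,
      add_zero, zero_add, sub_zero, zero_sub, neg_neg] at h2
    rw [← he] at h2
    exact sub_eq_zero.mp h2.symm
  set T : H →L[ℂ] H := P * e * P + q * e * q with hT
  have hTmem : T ∈ M :=
    add_mem (mul_mem (mul_mem hPmem (hmaps P hPmem)) hPmem)
      (mul_mem (mul_mem hqmem (hmaps P hPmem)) hqmem)
  refine ⟨hTmem, ?_⟩
  intro A hA
  -- corner commutation lemmas
  have c12 : T * (P * A * q) = (P * A * q) * T := by
    rw [hT]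
    simp only [mul_sub, sub_mul, mul_add, add_mul, mul_assoc,
      hpp, hpq, hqp, hqq, hpp', hpq', hqp', hqq', mul_zero, zero_mul,
      add_zero, zero_add, sub_zero, zero_sub]
    exact r12 A hA
  have c22 : T * (q * A * q) = (q * A * q) * T := by
    rw [hT]
    simp only [mul_sub, sub_mul, mul_add, add_mul, mul_assoc,
      hpp, hpq, hqp, hqq, hpp', hpq', hqp', hqq', mul_zero, zero_mul,
      add_zero, zero_add, sub_zero, zero_sub]
    exact r22 A hA
  have c11 : T * (P * A * P) = (P * A * P) * T := by
    have key : P * (e * (P * (A * P))) - P * (A * (P * (e * P))) = 0 := by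
      apply annihilator_eq_zero M P hPmem hcore
      intro X hX
      rw [← hq]
      have h1 := r12 (A * (P * X)) (mul_mem hA (mul_mem hPmem hX))
      have h2 := r12 X hX
      simp only [mul_sub, sub_mul, mul_add, add_mul, mul_assoc,
        hpp, hpq, hqp, hqq, hpp', hpq', hqp', hqq', mul_zero, zero_mul,
        add_zero, zero_add, sub_zero, zero_sub] at h1 h2 ⊢
      rw [h1, h2]
      exact sub_self _
    rw [hT]
    simp only [mul_sub, sub_mul, mul_add, add_mul, mul_assoc,
      hpp, hpq, hqp, hqq, hpp', hpq', hqp', hqq', mul_zero, zero_mul,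
      add_zero, zero_add, sub_zero, zero_sub]
    exact sub_eq_zero.mp key
  have c21 : T * (q * A * P) = (q * A * P) * T := by
    have key : q * (e * (q * (A * P))) - q * (A * (P * (e * P))) = 0 := by
      apply annihilator_eq_zero M P hPmem hcore
      intro X hX
      rw [← hq]
      have h1 := r22 (A * (P * X)) (mul_mem hA (mul_mem hPmem hX))
      have h2 := r12 X hX
      simp only [mul_sub, sub_mul, mul_add, add_mul, mul_assoc,
        hpp, hpq, hqp, hqq, hpp', hpq', hqp', hqq', mul_zero, zero_mul,
        add_zero, zero_add, sub_zero, zero_sub] at h1 h2 ⊢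
      rw [h1, h2]
      exact sub_self _
    rw [hT]
    simp only [mul_sub, sub_mul, mul_add, add_mul, mul_assoc,
      hpp, hpq, hqp, hqq, hpp', hpq', hqp', hqq', mul_zero, zero_mul,
      add_zero, zero_add, sub_zero, zero_sub]
    exact sub_eq_zero.mp key
  have hpq1 : P + q = 1 := by rw [hq]; abel
  have hA4 : A = P * A * P + P * A * q + q * A * P + q * A * q := by
    calc A = (P + q) * A * (P + q) := by rw [hpq1, one_mul, mul_one]
    _ = P * A * P + P * A * q + q * A * P + q * A * q := by noncomm_ring
  have e1 : T * A = T * (P * A * P) + T * (P * A * q) + T * (q * A * P) + T * (q * A * q) := by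
    conv_lhs => rw [hA4]
    simp only [mul_add]
  have e2 : A * T = (P * A * P) * T + (P * A * q) * T + (q * A * P) * T + (q * A * q) * T := by
    conv_lhs => rw [hA4]
    simp only [add_mul]
  rw [e1, e2, c11, c12, c21, c22]
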